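/- Let (a_i)_{i≥0} be a sequence of nonnegative real numbers and fix an integer k ≥ 1. For i ≥ 0 set A_i^k = max{a_i, a_{i+1}, …, a_{i+k}}. Assume D ≥ 0 and that a_{i+1+k} ≤ (1/8)·A_i^k + D for every i ≥ 0. Then for every i ≥ k+1, A_i^k ≤ (1/8)^{⌊i/(k+1)⌋} · max{A_0^k, A_1^k, …, A_k^k} + ((8+k)/7)·D. -/
import Mathlib


/-- Let `(a_i)` be a sequence of nonnegative reals, `k ≥ 1`,
and `A i = max {a_i, …, a_{i+k}}`.  If `D ≥ 0` and `a_{i+1+k} ≤ (1/8)·A_i + D` for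
all `i`, then for every `i ≥ k+1`,
`A_i ≤ (1/8)^⌊i/(k+1)⌋ · max{A_0, …, A_k} + ((8+k)/7)·D`. -/
theorem sequence_decay_lemma_constant
    (a : ℕ → ℝ) (ha : ∀ i, 0 ≤ a i) (k : ℕ) (hk : 1 ≤ k)
    (A : ℕ → ℝ)
    (hA : ∀ i, A i = (Finset.range (k + 1)).sup'
      (Finset.nonempty_range_iff.mpr (Nat.succ_ne_zero k)) (fun j => a (i + j)))
    (D : ℝ) (hD : 0 ≤ D)
    (hrec : ∀ i, a (i + 1 + k) ≤ (1/8 : ℝ) * A i + D) :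
    ∀ i, k + 1 ≤ i →
      A i ≤ (1/8 : ℝ) ^ (i / (k + 1))
            * (Finset.range (k + 1)).sup'
                (Finset.nonempty_range_iff.mpr (Nat.succ_ne_zero k)) (fun j => A j)
          + ((8 + (k : ℝ)) / 7) * D := by
  set M := (Finset.range (k + 1)).sup'
      (Finset.nonempty_range_iff.mpr (Nat.succ_ne_zero k)) (fun j => A j) with hMdef
  set E := ((8 + (k : ℝ)) / 7) * D with hEdef
  have hk0 : (0:ℝ) ≤ (k:ℝ) := Nat.cast_nonneg k
  have hE : 0 ≤ E := by
    rw [hEdef]; positivity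
  have hA0 : ∀ i, 0 ≤ A i := by
    intro i
    rw [hA]
    have := Finset.le_sup' (fun j => a (i + j)) (Finset.mem_range.mpr (Nat.succ_pos k))
    exact le_trans (ha (i + 0)) this
  have hM0 : 0 ≤ M := by
    have := Finset.le_sup' (fun j => A j) (Finset.mem_range.mpr (Nat.succ_pos k))
    exact le_trans (hA0 0) this
  have hED : (1/8:ℝ) * E + D ≤ E := by
    rw [hEdef]; nlinarith
  have key : ∀ i, A i ≤ (1/8:ℝ) ^ (i / (k + 1)) * M + E := by
    intro i
    induction i using Nat.strong_induction_on with
    | _ i ih =>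
      rcases le_or_gt i k with h | h
      · have hq : i / (k+1) = 0 := Nat.div_eq_of_lt (by omega)
        rw [hq, pow_zero, one_mul]
        have hAM : A i ≤ M :=
          Finset.le_sup' (fun j => A j) (Finset.mem_range.mpr (by omega))
        linarith
      · have hq : 1 ≤ i / (k+1) := (Nat.one_le_div_iff (by omega)).mpr (by omega)
        rw [hA]
        apply Finset.sup'_le
        intro j hj
        have hj' : j < k+1 := Finset.mem_range.mp hj
        set t := i - (k+1) + j with ht
        have hti : t < i := by omega
        have hit : i + j = t + 1 + k := by omega
        have h1 : a (i + j) ≤ (1/8) * A t + D := by rw [hit]; exact hrec t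
        have h2 : A t ≤ (1/8:ℝ)^(t/(k+1)) * M + E := ih t hti
        have h3 : i/(k+1) - 1 ≤ t/(k+1) := by
          have e1 : i = (i - (k+1)) + (k+1) := by omega
          have e2 : i / (k+1) = (i - (k+1))/(k+1) + 1 := by
            conv_lhs => rw [e1]
            exact Nat.add_div_right _ (by omega)
          have e3 : (i - (k+1))/(k+1) ≤ t/(k+1) := Nat.div_le_div_right (by omega)
          omega
        have h4 : (1/8:ℝ)^(t/(k+1)) * M ≤ (1/8:ℝ)^(i/(k+1) - 1) * M :=
          mul_le_mul_of_nonneg_right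
            (pow_le_pow_of_le_one (by norm_num) (by norm_num) h3) hM0
        have hpow : (1/8:ℝ)^(i/(k+1)) = (1/8) * (1/8:ℝ)^(i/(k+1) - 1) := by
          rw [← pow_succ']
          congr 1
          omega
        rw [hpow]
        nlinarith
  intro i _
  exact key i
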